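/- Suppose M : [0,∞) → [0,∞) is continuous with M(t) ≥ m₀ > 0 for all t ≥ 0 and t ↦ M(t)/t decreasing on (0,∞), and let θ > 4. Then for all t > 0, (1/t)·[(1/2)M̂(t) − (1/θ)M(t)·t] ≥ ((θ−4)/(4θ))·m₀, where M̂(t) = ∫₀ᵗ M(s) ds. -/
import Mathlib


open Set

/-- If `M : [0,∞) → [0,∞)` is continuous, `M ≥ m₀ > 0`, `t ↦ M t / t` is decreasing on
`(0,∞)` and `θ > 4`, then for all `t > 0`,
`(1/t) [ (1/2) M̂ t − (1/θ) M t * t ] ≥ ((θ−4)/(4θ)) m₀`, where `M̂ t = ∫₀ᵗ M`. -/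
theorem stmt2 (M : ℝ → ℝ) (m₀ θ : ℝ) (hm₀ : 0 < m₀)
    (hMc : ContinuousOn M (Ici 0))
    (hM1 : ∀ t, 0 ≤ t → m₀ ≤ M t)
    (hMdec : AntitoneOn (fun t => M t / t) (Ioi 0))
    (hθ : 4 < θ) :
    ∀ t, 0 < t →
      ((θ - 4) / (4 * θ)) * m₀ ≤
        (1 / t) * ((1 / 2) * (∫ s in (0 : ℝ)..t, M s) - (1 / θ) * (M t * t)) := by
  intro t ht
  have hθ0 : (0:ℝ) < θ := by linarith
  have hsub : uIcc (0:ℝ) t ⊆ Ici 0 := by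
    rw [uIcc_of_le ht.le]
    exact fun x hx => hx.1
  have hInt : IntervalIntegrable M MeasureTheory.volume 0 t :=
    (hMc.mono hsub).intervalIntegrable
  have hInt2 : IntervalIntegrable (fun s => s * (M t / t)) MeasureTheory.volume 0 t :=
    (continuous_id.mul continuous_const).intervalIntegrable 0 t
  have hle : ∀ s ∈ Icc (0:ℝ) t, s * (M t / t) ≤ M s := by
    intro s hs
    rcases eq_or_lt_of_le hs.1 with h0 | h0
    · simp [← h0]
      exact le_trans hm₀.le (hM1 0 le_rfl)
    · have := hMdec (mem_Ioi.2 h0) (mem_Ioi.2 ht) hs.2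
      calc s * (M t / t) ≤ s * (M s / s) := by
            exact mul_le_mul_of_nonneg_left this h0.le
        _ = M s := by field_simp
  have hmono : ∫ s in (0:ℝ)..t, s * (M t / t) ≤ ∫ s in (0:ℝ)..t, M s := by
    apply intervalIntegral.integral_mono_on ht.le hInt2 hInt hle
  have hval : ∫ s in (0:ℝ)..t, s * (M t / t) = t * M t / 2 := by
    rw [intervalIntegral.integral_mul_const, integral_id]
    field_simp
    ring
  have hkey : t * M t / 2 ≤ ∫ s in (0:ℝ)..t, M s := hval ▸ hmono
  have hMt : m₀ ≤ M t := hM1 t ht.le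
  rw [div_mul_eq_mul_div, div_le_iff₀ (by positivity : (0:ℝ) < 4*θ)]
  rw [one_div, inv_mul_eq_div, div_mul_eq_mul_div, le_div_iff₀ ht]
  have e : ((1/2 * ∫ s in (0:ℝ)..t, M s) - 1/θ * (M t * t)) * (4*θ)
      = 2*θ*(∫ s in (0:ℝ)..t, M s) - 4*(M t * t) := by
    field_simp; ring
  rw [e]
  nlinarith [mul_le_mul_of_nonneg_left hkey (by positivity : (0:ℝ) ≤ 2*θ),
    mul_le_mul_of_nonneg_left hMt (by nlinarith : (0:ℝ) ≤ (θ-4)*t)]
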